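/- Let Ω_c = ℝⁿ∖(Ω∪Ω_I). Let u, v : ℝⁿ → ℝ be measurable, square-integrable functions with u = 0 and v = 0 almost everywhere on ℝⁿ∖Ω. Then ∬_{Ω_c×ℝⁿ} |(u(y)−u(x))·(v(y)−v(x))|/|y−x|^{n+2s} dy dx ≤ (n·ωₙ/(2·s·λ^{2s}))·‖u‖_{L²(Ω)}·‖v‖_{L²(Ω)}. -/

import Mathlib

open MeasureTheory Real Set
open scoped ENNReal NNReal

noncomputable section

abbrev Eucl (n : ℕ) := EuclideanSpace ℝ (Fin n)

/-- `ωₙ`, the Lebesgue measure of the unit ball of `ℝⁿ`. -/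
def unitBallVol (n : ℕ) : ℝ := (volume (Metric.ball (0 : Eucl n) 1)).toReal

/-- The interaction domain `Ω_I = {y ∈ ℝⁿ∖Ω : |y−x| < λ for some x ∈ Ω}`. -/
def interDom {n : ℕ} (Ω : Set (Eucl n)) (lam : ℝ) : Set (Eucl n) :=
  {y | y ∉ Ω ∧ ∃ x ∈ Ω, ‖y - x‖ < lam}

/-- The `L²(Ω)` norm. -/
def L2NormOn {n : ℕ} (Ω : Set (Eucl n)) (v : Eucl n → ℝ) : ℝ :=
  Real.sqrt (∫ x in Ω, v x ^ 2)

lemma aux_meas_g (n : ℕ) (lam r : ℝ) :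
    Measurable (fun z : Eucl n => if lam ≤ ‖z‖ then ‖z‖ ^ (-r) else 0) := by
  have hs : MeasurableSet {z : Eucl n | lam ≤ ‖z‖} :=
    measurableSet_le measurable_const measurable_norm
  exact Measurable.ite hs (by fun_prop) measurable_const

lemma aux_integrable_g (n : ℕ) (s lam : ℝ) (hs : 0 < s) (hlam : 0 < lam) :
    Integrable (fun z : Eucl n => if lam ≤ ‖z‖ then ‖z‖ ^ (-((n:ℝ)+2*s)) else 0) := by
  set r : ℝ := (n:ℝ) + 2*s with hrdef
  have hr0 : 0 < r := by positivity
  have hnr : (Module.finrank ℝ (Eucl n) : ℝ) < r := by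
    rw [finrank_euclideanSpace_fin]; simp only [hrdef]; nlinarith
  set C : ℝ := (lam⁻¹^2 + 1) ^ (r/2) with hC
  have hC0 : 0 < C := Real.rpow_pos_of_pos (by positivity) _
  refine ((integrable_rpow_neg_one_add_norm_sq hnr).const_mul C).mono'
    ((aux_meas_g n lam r).aestronglyMeasurable) (Filter.Eventually.of_forall fun z => ?_)
  by_cases hz : lam ≤ ‖z‖
  · simp only [if_pos hz]
    have hz0 : 0 < ‖z‖ := lt_of_lt_of_le hlam hz
    rw [Real.norm_eq_abs, abs_of_nonneg (Real.rpow_nonneg (norm_nonneg z) _)]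
    have h2 : (1:ℝ) ≤ lam⁻¹^2 * ‖z‖^2 := by
      have h3 : lam⁻¹ * lam ≤ lam⁻¹ * ‖z‖ :=
        mul_le_mul_of_nonneg_left hz (inv_nonneg.2 hlam.le)
      rw [inv_mul_cancel₀ hlam.ne'] at h3
      calc (1:ℝ) = 1*1 := (one_mul 1).symm
      _ ≤ (lam⁻¹*‖z‖)*(lam⁻¹*‖z‖) := mul_le_mul h3 h3 zero_le_one (le_trans zero_le_one h3)
      _ = lam⁻¹^2*‖z‖^2 := by ring
    have h1 : (1:ℝ) + ‖z‖^2 ≤ (lam⁻¹^2 + 1) * ‖z‖^2 := by nlinarith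
    have h3 : ((1:ℝ)+‖z‖^2) ^ (r/2) ≤ C * ‖z‖ ^ r := by
      calc ((1:ℝ)+‖z‖^2)^(r/2) ≤ ((lam⁻¹^2+1)*‖z‖^2)^(r/2) :=
            Real.rpow_le_rpow (by positivity) h1 (by positivity)
      _ = C * (‖z‖^2)^(r/2) := Real.mul_rpow (by positivity) (by positivity)
      _ = C * ‖z‖ ^ r := by
          rw [← Real.rpow_natCast ‖z‖ 2, ← Real.rpow_mul (norm_nonneg z)]
          norm_num
          exact Or.inl (by rw [show (2:ℝ) * (r / 2) = r by ring])
    have hpos1 : (0:ℝ) < ‖z‖ ^ r := Real.rpow_pos_of_pos hz0 _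
    have hpos2 : (0:ℝ) < ((1:ℝ)+‖z‖^2) ^ (r/2) := Real.rpow_pos_of_pos (by positivity) _
    rw [Real.rpow_neg (norm_nonneg z), neg_div, Real.rpow_neg (by positivity : (0:ℝ) ≤ 1 + ‖z‖^2),
      inv_eq_one_div, inv_eq_one_div, mul_one_div, div_le_div_iff₀ hpos1 hpos2, one_mul]
    exact h3
  · simp only [if_neg hz, Real.norm_eq_abs, abs_zero]
    positivity

lemma aux_integral_g (n : ℕ) (hn : 1 ≤ n) (s lam : ℝ) (hs : 0 < s) (hlam : 0 < lam) :
    ∫ z : Eucl n, (if lam ≤ ‖z‖ then ‖z‖ ^ (-((n:ℝ)+2*s)) else 0)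
      = (n : ℝ) * unitBallVol n * (lam ^ (-(2*s)) / (2*s)) := by
  haveI : Nontrivial (Eucl n) :=
    Module.nontrivial_of_finrank_pos (R := ℝ) (by rw [finrank_euclideanSpace_fin]; omega)
  have hdim : Module.finrank ℝ (Eucl n) = n := finrank_euclideanSpace_fin
  have key := MeasureTheory.integral_fun_norm_addHaar (volume : Measure (Eucl n))
    (fun y : ℝ => if lam ≤ y then y ^ (-((n:ℝ)+2*s)) else 0)
  rw [hdim] at key
  rw [key]
  have hJ : (∫ y in Ioi (0:ℝ), y ^ (n - 1) • (if lam ≤ y then y ^ (-((n:ℝ)+2*s)) else 0))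
      = lam ^ (-(2*s)) / (2*s) := by
    have hcong : ∀ y ∈ Ioi (0:ℝ),
        y ^ (n - 1) • (if lam ≤ y then y ^ (-((n:ℝ)+2*s)) else 0)
          = indicator (Ici lam) (fun y : ℝ => y ^ (-1-2*s)) y := by
      intro y hy
      by_cases h : lam ≤ y
      · rw [if_pos h, Set.indicator_of_mem (mem_Ici.mpr h), smul_eq_mul,
          ← Real.rpow_natCast y (n-1), ← Real.rpow_add hy]
        congr 1
        rw [Nat.cast_sub hn, Nat.cast_one]
        ring
      · rw [if_neg h, smul_zero, Set.indicator_of_notMem (fun hc => h (mem_Ici.mp hc))]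
    have hinter : Ioi (0:ℝ) ∩ Ici lam = Ici lam :=
      inter_eq_right.mpr (fun y (hy : y ∈ Ici lam) => lt_of_lt_of_le hlam hy)
    rw [setIntegral_congr_fun measurableSet_Ioi hcong,
      setIntegral_indicator measurableSet_Ici, hinter,
      integral_Ici_eq_integral_Ioi,
      integral_Ioi_rpow_of_lt (by linarith : (-1-2*s) < -1) hlam]
    rw [show (-1-2*s) + 1 = -(2*s) by ring, neg_div_neg_eq, Real.rpow_neg hlam.le]
  rw [hJ, nsmul_eq_mul, smul_eq_mul, unitBallVol]
  simp only [measureReal_def]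
  ring

lemma aux_l2 {n : ℕ} (Ω : Set (Eucl n)) (hΩm : MeasurableSet Ω)
    (u : Eucl n → ℝ) (hu : Measurable u)
    (hu2 : Integrable (fun x => u x ^ 2))
    (hu0 : ∀ᵐ x ∂(volume : Measure (Eucl n)), x ∉ Ω → u x = 0) :
    (∫⁻ y, (ENNReal.ofReal |u y|) ^ (2:ℝ)) ^ (1/(2:ℝ)) = ENNReal.ofReal (L2NormOn Ω u) := by
  have h1 : ∀ y : Eucl n, (ENNReal.ofReal |u y|) ^ (2:ℝ) = ENNReal.ofReal (u y ^ 2) := fun y => by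
    rw [ENNReal.ofReal_rpow_of_nonneg (abs_nonneg _) (by norm_num)]
    congr 1
    rw [show ((2:ℝ)) = ((2:ℕ):ℝ) by norm_num, Real.rpow_natCast, sq_abs]
  simp_rw [h1]
  rw [← ofReal_integral_eq_lintegral_ofReal hu2
    (Filter.Eventually.of_forall fun y => sq_nonneg _)]
  have hΩint : (∫ x, u x ^ 2) = ∫ x in Ω, u x ^ 2 := by
    have heq : (fun x => u x ^ 2) =ᵐ[(volume : Measure (Eucl n))]
        Ω.indicator (fun x => u x ^ 2) := by
      filter_upwards [hu0] with x hx
      by_cases hxΩ : x ∈ Ω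
      · rw [Set.indicator_of_mem hxΩ]
      · rw [Set.indicator_of_notMem hxΩ, hx hxΩ]; norm_num
    rw [integral_congr_ae heq, integral_indicator hΩm]
  rw [hΩint, ENNReal.ofReal_rpow_of_nonneg (integral_nonneg fun x => sq_nonneg _) (by norm_num),
    L2NormOn, Real.sqrt_eq_rpow]

lemma aux_CS {n : ℕ} (Ω : Set (Eucl n)) (hΩm : MeasurableSet Ω)
    (u v : Eucl n → ℝ) (hu : Measurable u) (hv : Measurable v)
    (hu2 : Integrable (fun x => u x ^ 2)) (hv2 : Integrable (fun x => v x ^ 2))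
    (hu0 : ∀ᵐ x ∂(volume : Measure (Eucl n)), x ∉ Ω → u x = 0)
    (hv0 : ∀ᵐ x ∂(volume : Measure (Eucl n)), x ∉ Ω → v x = 0) :
    ∫⁻ y, ENNReal.ofReal |u y * v y| ≤ ENNReal.ofReal (L2NormOn Ω u * L2NormOn Ω v) := by
  have h2 : Real.HolderConjugate 2 2 := Real.holderConjugate_iff.mpr ⟨one_lt_two, by norm_num⟩
  have hmu : AEMeasurable (fun y : Eucl n => ENNReal.ofReal |u y|) volume :=
    (ENNReal.measurable_ofReal.comp hu.abs).aemeasurable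
  have hmv : AEMeasurable (fun y : Eucl n => ENNReal.ofReal |v y|) volume :=
    (ENNReal.measurable_ofReal.comp hv.abs).aemeasurable
  calc ∫⁻ y, ENNReal.ofReal |u y * v y|
      = ∫⁻ y, (ENNReal.ofReal |u y|) * (ENNReal.ofReal |v y|) := by
        simp_rw [abs_mul, ENNReal.ofReal_mul (abs_nonneg _)]
    _ ≤ (∫⁻ y, (ENNReal.ofReal |u y|) ^ (2:ℝ)) ^ (1/(2:ℝ)) *
        (∫⁻ y, (ENNReal.ofReal |v y|) ^ (2:ℝ)) ^ (1/(2:ℝ)) :=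
        ENNReal.lintegral_mul_le_Lp_mul_Lq volume h2 hmu hmv
    _ = ENNReal.ofReal (L2NormOn Ω u) * ENNReal.ofReal (L2NormOn Ω v) := by
        rw [aux_l2 Ω hΩm u hu hu2 hu0, aux_l2 Ω hΩm v hv hv2 hv0]
    _ = ENNReal.ofReal (L2NormOn Ω u * L2NormOn Ω v) :=
        (ENNReal.ofReal_mul (Real.sqrt_nonneg _)).symm

/-- Let `Ω_c = ℝⁿ∖(Ω∪Ω_I)`. For measurable, square-integrable
`u, v : ℝⁿ → ℝ` vanishing a.e. off `Ω`,
`∬_{Ω_c×ℝⁿ} |(u(y)−u(x))·(v(y)−v(x))|/|y−x|^{n+2s} dy dx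
  ≤ (n·ωₙ/(2·s·λ^{2s}))·‖u‖_{L²(Ω)}·‖v‖_{L²(Ω)}`. -/
theorem stmt7 (n : ℕ) (hn : 1 ≤ n) (s : ℝ) (hs : s ∈ Set.Ioo (0 : ℝ) 1)
    (Ω : Set (Eucl n)) (hΩne : Ω.Nonempty) (hΩo : IsOpen Ω) (hΩb : Bornology.IsBounded Ω)
    (lam : ℝ) (hlam : 0 < lam)
    (u v : Eucl n → ℝ) (hu : Measurable u) (hv : Measurable v)
    (hu2 : Integrable (fun x => u x ^ 2)) (hv2 : Integrable (fun x => v x ^ 2))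
    (hu0 : ∀ᵐ x ∂volume, x ∉ Ω → u x = 0) (hv0 : ∀ᵐ x ∂volume, x ∉ Ω → v x = 0) :
    ∫ p in ((Ω ∪ interDom Ω lam)ᶜ ×ˢ (Set.univ : Set (Eucl n))),
        |(u p.2 - u p.1) * (v p.2 - v p.1)| / ‖p.2 - p.1‖ ^ ((n : ℝ) + 2 * s) ≤
      (n : ℝ) * unitBallVol n / (2 * s * lam ^ (2 * s)) * L2NormOn Ω u * L2NormOn Ω v := by
  obtain ⟨hs0, hs1⟩ := hs
  set r : ℝ := (n:ℝ) + 2*s with hrdef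
  set g : Eucl n → ℝ := fun z => if lam ≤ ‖z‖ then ‖z‖ ^ (-r) else 0 with hgdef
  set S₁ : Set (Eucl n) := (Ω ∪ interDom Ω lam)ᶜ with hS₁def
  -- measurability of S₁
  have hIopen : IsOpen {y : Eucl n | ∃ x ∈ Ω, ‖y - x‖ < lam} := by
    have : {y : Eucl n | ∃ x ∈ Ω, ‖y - x‖ < lam} = ⋃ x ∈ Ω, Metric.ball x lam := by
      ext y; simp [Metric.mem_ball, dist_eq_norm]
    rw [this]; exact isOpen_biUnion fun x _ => Metric.isOpen_ball
  have hIm : MeasurableSet (interDom Ω lam) := by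
    have : interDom Ω lam = Ωᶜ ∩ {y : Eucl n | ∃ x ∈ Ω, ‖y - x‖ < lam} := by
      ext y; simp [interDom]
    rw [this]
    exact hΩo.measurableSet.compl.inter hIopen.measurableSet
  have hS₁m : MeasurableSet S₁ := (hΩo.measurableSet.union hIm).compl
  -- distance fact
  have hdist : ∀ x ∈ S₁, ∀ y ∈ Ω, lam ≤ ‖y - x‖ := by
    intro x hx y hy
    by_contra hcon
    push_neg at hcon
    have hxΩ : x ∉ Ω := fun hxx => hx (Or.inl hxx)
    exact hx (Or.inr ⟨hxΩ, ⟨y, hy, by rwa [norm_sub_rev y x] at hcon⟩⟩)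
  -- measurability
  have hFm : Measurable (fun p : Eucl n × Eucl n =>
      |(u p.2 - u p.1) * (v p.2 - v p.1)| / ‖p.2 - p.1‖ ^ r) := by
    apply Measurable.div
    · exact (((hu.comp measurable_snd).sub (hu.comp measurable_fst)).mul
        ((hv.comp measurable_snd).sub (hv.comp measurable_fst))).abs
    · fun_prop
  have hFnn : ∀ p : Eucl n × Eucl n,
      0 ≤ |(u p.2 - u p.1) * (v p.2 - v p.1)| / ‖p.2 - p.1‖ ^ r :=
    fun p => div_nonneg (abs_nonneg _) (Real.rpow_nonneg (norm_nonneg _) _)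
  have hgm : Measurable g := aux_meas_g n lam r
  -- nonnegativity of RHS
  have hωnn : (0:ℝ) ≤ unitBallVol n := ENNReal.toReal_nonneg
  have hRHSnn : 0 ≤ (n : ℝ) * unitBallVol n / (2 * s * lam ^ (2 * s)) *
      L2NormOn Ω u * L2NormOn Ω v := by
    have h1 : (0:ℝ) < 2 * s * lam ^ (2*s) := by positivity
    have h2 : (0:ℝ) ≤ L2NormOn Ω u := Real.sqrt_nonneg _
    have h3 : (0:ℝ) ≤ L2NormOn Ω v := Real.sqrt_nonneg _
    positivity
  -- pass to lintegral
  rw [integral_eq_lintegral_of_nonneg_ae (Filter.Eventually.of_forall fun p => hFnn p)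
    hFm.aestronglyMeasurable]
  apply ENNReal.toReal_le_of_le_ofReal hRHSnn
  -- the product measure
  set P : Measure (Eucl n × Eucl n) := (volume.restrict S₁).prod volume with hPdef
  have hprodmeas : (volume : Measure (Eucl n × Eucl n)).restrict (S₁ ×ˢ univ) = P := by
    rw [MeasureTheory.Measure.volume_eq_prod, hPdef, ← Measure.prod_restrict, Measure.restrict_univ]
  rw [hprodmeas]
  -- ae lifting
  have lift_fst : ∀ {p : Eucl n → Prop}, (∀ᵐ x ∂volume.restrict S₁, p x) →
      (∀ᵐ q ∂P, p q.1) := fun h =>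
    Measure.quasiMeasurePreserving_fst.tendsto_ae.eventually h
  have lift_snd : ∀ {p : Eucl n → Prop}, (∀ᵐ x ∂(volume : Measure (Eucl n)), p x) →
      (∀ᵐ q ∂P, p q.2) := fun h =>
    Measure.quasiMeasurePreserving_snd.tendsto_ae.eventually h
  -- dominating function
  set B : Eucl n × Eucl n → ℝ≥0∞ :=
    fun p => ENNReal.ofReal |u p.2 * v p.2| * ENNReal.ofReal (g (p.2 - p.1)) with hBdef
  have hBm : Measurable B :=
    (ENNReal.measurable_ofReal.comp ((hu.comp measurable_snd).mul
        (hv.comp measurable_snd)).abs).mul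
      (ENNReal.measurable_ofReal.comp (hgm.comp (measurable_snd.sub measurable_fst)))
  have hae : ∀ᵐ p ∂P, ENNReal.ofReal
      (|(u p.2 - u p.1) * (v p.2 - v p.1)| / ‖p.2 - p.1‖ ^ r) ≤ B p := by
    filter_upwards [lift_fst (ae_restrict_mem hS₁m), lift_fst (ae_restrict_of_ae hu0),
      lift_fst (ae_restrict_of_ae hv0), lift_snd hu0] with p hp1 hpu hpv hyu
    have hxΩ : p.1 ∉ Ω := fun h => hp1 (Or.inl h)
    rw [hpu hxΩ, hpv hxΩ, sub_zero, sub_zero]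
    by_cases hyΩ : p.2 ∈ Ω
    · have hd : lam ≤ ‖p.2 - p.1‖ := hdist p.1 hp1 p.2 hyΩ
      have hg : g (p.2 - p.1) = ‖p.2 - p.1‖ ^ (-r) := if_pos hd
      rw [hBdef]
      simp only []
      rw [hg, ← ENNReal.ofReal_mul (abs_nonneg _)]
      apply ENNReal.ofReal_le_ofReal
      rw [Real.rpow_neg (norm_nonneg _), div_eq_mul_inv]
    · rw [hyu hyΩ]
      simp only [zero_mul, abs_zero, zero_div, ENNReal.ofReal_zero]
      exact zero_le
  -- the tail lintegral
  set K : ℝ≥0∞ := ∫⁻ z, ENNReal.ofReal (g z) with hKdef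
  have hgnn : 0 ≤ᵐ[(volume : Measure (Eucl n))] g :=
    Filter.Eventually.of_forall fun z => by
      by_cases h : lam ≤ ‖z‖
      · simp only [hgdef, if_pos h]; exact Real.rpow_nonneg (norm_nonneg _) _
      · simp only [hgdef, if_neg h]; exact le_refl 0
  have hgint : Integrable g := aux_integrable_g n s lam hs0 hlam
  have hK : K = ENNReal.ofReal ((n : ℝ) * unitBallVol n * (lam ^ (-(2*s)) / (2*s))) := by
    rw [hKdef, ← ofReal_integral_eq_lintegral_ofReal hgint hgnn]
    congr 1
    exact aux_integral_g n hn s lam hs0 hlam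
  have hKne : K ≠ ⊤ := by rw [hK]; exact ENNReal.ofReal_ne_top
  -- main chain
  calc ∫⁻ p, ENNReal.ofReal
        (|(u p.2 - u p.1) * (v p.2 - v p.1)| / ‖p.2 - p.1‖ ^ r) ∂P
      ≤ ∫⁻ p, B p ∂P := lintegral_mono_ae hae
    _ ≤ ∫⁻ p, B p ∂((volume : Measure (Eucl n)).prod volume) := by
        rw [← hprodmeas]
        exact setLIntegral_le_lintegral _ _
    _ = ∫⁻ x, ∫⁻ y, ENNReal.ofReal |u y * v y| * ENNReal.ofReal (g (y - x)) ∂volume ∂volume :=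
        lintegral_prod _ hBm.aemeasurable
    _ = ∫⁻ y, ∫⁻ x, ENNReal.ofReal |u y * v y| * ENNReal.ofReal (g (y - x)) ∂volume ∂volume :=
        lintegral_lintegral_swap hBm.aemeasurable
    _ = ∫⁻ y, ENNReal.ofReal |u y * v y| * K ∂volume := by
        refine lintegral_congr fun y => ?_
        rw [lintegral_const_mul' _ _ ENNReal.ofReal_ne_top]
        congr 1
        rw [hKdef]
        exact (Measure.measurePreserving_sub_left (volume : Measure (Eucl n)) y).lintegral_comp
          (ENNReal.measurable_ofReal.comp hgm)
    _ = (∫⁻ y, ENNReal.ofReal |u y * v y| ∂volume) * K := lintegral_mul_const' _ _ hKne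
    _ ≤ ENNReal.ofReal (L2NormOn Ω u * L2NormOn Ω v) * K :=
        mul_le_mul_left (aux_CS Ω hΩo.measurableSet u v hu hv hu2 hv2 hu0 hv0) K
    _ ≤ ENNReal.ofReal ((n : ℝ) * unitBallVol n / (2 * s * lam ^ (2 * s)) *
        L2NormOn Ω u * L2NormOn Ω v) := by
        have h2 : (0:ℝ) ≤ L2NormOn Ω u := Real.sqrt_nonneg _
        have h3 : (0:ℝ) ≤ L2NormOn Ω v := Real.sqrt_nonneg _
        rw [hK, ← ENNReal.ofReal_mul (mul_nonneg h2 h3)]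
        apply ENNReal.ofReal_le_ofReal
        rw [Real.rpow_neg hlam.le]
        have hne1 : lam ^ (2*s) ≠ 0 := by positivity
        have hne2 : s ≠ 0 := ne_of_gt hs0
        apply le_of_eq
        field_simp
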